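/- arXiv:2007.02008 — 2 statements merged into one kernel-verified Lean document; each statement's English description precedes it below -/
import Mathlib

section
/- Let G be a nonempty finite simple graph and X a nonnegative unit eigenvector of Q(G) corresponding to q(G), with coordinates x_v. Suppose u1u2 ∈ E(G), v1v2 ∉ E(G), v1 ≠ v2, x_{v1} + x_{v2} ≥ x_{u1} + x_{u2}, and x_{v1} + x_{v2} > 0. Then q(G − u1u2 + v1v2) > q(G). -/
open Matrix SimpleGraph

/-- The signless Laplacian matrix `Q(G) = D(G) + A(G)` of a finite simple graph. -/
noncomputable def signlessLaplacian {V : Type*} [Fintype V] (G : SimpleGraph V) :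
    Matrix V V ℝ :=
  letI := Classical.decEq V
  letI : DecidableRel G.Adj := Classical.decRel _
  Matrix.diagonal (fun v => (G.degree v : ℝ)) + G.adjMatrix ℝ

/-- The `Q`-spectral radius `q(G)`: the largest eigenvalue of `Q(G)`. -/
noncomputable def qspec {V : Type*} [Fintype V] (G : SimpleGraph V) : ℝ :=
  letI := Classical.decEq V
  sSup (spectrum ℝ (signlessLaplacian G))

open scoped Classical in
/-- indicator of the pair {p,q} -/
noncomputable def pind {V : Type*} (p q : V) : V → ℝ :=
  fun a => (if a = p then 1 else 0) + (if a = q then 1 else 0)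

lemma pind_mul {V : Type*} [DecidableEq V] (p q a b : V) (hpq : p ≠ q) (hab : a ≠ b) :
    pind p q a * pind p q b = if s(a, b) = s(p, q) then 1 else 0 := by
  unfold pind
  by_cases h1 : a = p <;> by_cases h2 : a = q <;> by_cases h3 : b = p <;> by_cases h4 : b = q <;>
    simp_all [Sym2.eq_iff]

lemma pind_sq {V : Type*} (p q : V) (hpq : p ≠ q) (a : V) :
    pind p q a * pind p q a = pind p q a := by
  unfold pind
  by_cases h1 : a = p <;> by_cases h2 : a = q <;> simp_all

lemma pind_dot {V : Type*} [Fintype V] (p q : V) (hpq : p ≠ q) (y : V → ℝ) :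
    (∑ a, pind p q a * y a) = y p + y q := by
  unfold pind
  classical
  have : ∀ a, ((if a = p then (1:ℝ) else 0) + (if a = q then 1 else 0)) * y a
      = (if a = p then y a else 0) + (if a = q then y a else 0) := by
    intro a; by_cases h1 : a = p <;> by_cases h2 : a = q <;> simp_all
  simp only [this, Finset.sum_add_distrib, Finset.sum_ite_eq' Finset.univ,
    Finset.mem_univ, if_true]

lemma sl_apply {V : Type*} [Fintype V] (G : SimpleGraph V) (a b : V) :
    letI := Classical.decEq V
    letI : DecidableRel G.Adj := Classical.decRel _
    signlessLaplacian G a b =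
      (if a = b then ∑ c, (if G.Adj a c then (1:ℝ) else 0) else 0) +
      (if G.Adj a b then (1:ℝ) else 0) := by
  classical
  unfold signlessLaplacian
  rw [Matrix.add_apply]
  congr 1
  · by_cases h : a = b
    · subst h
      rw [Matrix.diagonal_apply_eq, if_pos rfl, SimpleGraph.degree,
        SimpleGraph.neighborFinset_eq_filter, Finset.card_filter]
      all_goals try push_cast
      all_goals try refine Finset.sum_congr rfl fun c _ => ?_
      all_goals try (by_cases hc : G.Adj a c <;> simp [hc])
    · rw [Matrix.diagonal_apply_ne _ h, if_neg h]
  all_goals (by_cases h : G.Adj a b <;> simp [h])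

lemma sl_herm {V : Type*} [Fintype V] (G : SimpleGraph V) :
    (signlessLaplacian G).IsHermitian := by
  classical
  ext a b
  rw [Matrix.conjTranspose_apply, star_trivial, sl_apply, sl_apply]
  by_cases h : a = b
  · subst h; rfl
  · rw [if_neg h, if_neg (Ne.symm h)]
    by_cases hadj : G.Adj a b
    · simp [hadj, hadj.symm]
    · simp [hadj, fun hh : G.Adj b a => hadj hh.symm, SimpleGraph.adj_comm]

lemma pind_count {V : Type*} [Fintype V] [DecidableEq V] (p q a : V) (hpq : p ≠ q) :
    ∑ c, (if c ≠ a ∧ s(a, c) = s(p, q) then (1:ℝ) else 0) = pind p q a * pind p q a := by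
  rw [pind_sq _ _ hpq]
  by_cases h1 : a = p
  · subst h1
    have hcond : ∀ c, (c ≠ a ∧ s(a, c) = s(a, q)) ↔ c = q := by
      intro c; simp only [ne_eq, Sym2.eq_iff]; aesop
    simp only [hcond, Finset.sum_ite_eq' Finset.univ, Finset.mem_univ, if_true]
    simp [pind, hpq, Ne.symm hpq]
  · by_cases h2 : a = q
    · subst h2
      have hcond : ∀ c, (c ≠ a ∧ s(a, c) = s(p, a)) ↔ c = p := by
        intro c; simp only [ne_eq, Sym2.eq_iff]; aesop
      simp only [hcond, Finset.sum_ite_eq' Finset.univ, Finset.mem_univ, if_true]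
      simp [pind, hpq, Ne.symm hpq]
    · have hcond : ∀ c, ¬(c ≠ a ∧ s(a, c) = s(p, q)) := by
        intro c; simp only [ne_eq, Sym2.eq_iff]; aesop
      simp only [hcond, if_false, Finset.sum_const_zero]
      simp [pind, h1, h2]

/-- Edge-rotation lemma: if `X` is the principal eigenvector of `Q(G)`,
`u₁u₂ ∈ E(G)`, `v₁v₂ ∉ E(G)`, `x_{v₁} + x_{v₂} ≥ x_{u₁} + x_{u₂}` and
`x_{v₁} + x_{v₂} > 0`, then `q(G − u₁u₂ + v₁v₂) > q(G)`. -/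
theorem qspec_edge_rotation {V : Type*} [Fintype V] (G : SimpleGraph V)
    (u1 u2 v1 v2 : V) (X : V → ℝ)
    (hX0 : ∀ v, 0 ≤ X v) (hXunit : ∑ v, X v ^ 2 = 1)
    (hXeig : (signlessLaplacian G).mulVec X = qspec G • X)
    (hu : G.Adj u1 u2) (hv : ¬ G.Adj v1 v2) (hv12 : v1 ≠ v2)
    (h1 : X u1 + X u2 ≤ X v1 + X v2) (h2 : 0 < X v1 + X v2) :
    qspec G <
      qspec (SimpleGraph.fromEdgeSet ((G.edgeSet \ {s(u1, u2)}) ∪ {s(v1, v2)})) := by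
    classical
  set Hg := SimpleGraph.fromEdgeSet ((G.edgeSet \ {s(u1, u2)}) ∪ {s(v1, v2)}) with hHg
  set M := signlessLaplacian G with hM
  set N := signlessLaplacian Hg with hN
  have hu12 : u1 ≠ u2 := hu.ne
  have hevu : s(v1, v2) ≠ s(u1, u2) := by
    intro h
    exact hv ((SimpleGraph.mem_edgeSet _).1 (by rw [h]; exact (SimpleGraph.mem_edgeSet _).2 hu))
  have hevu' : ¬(v1 = u1 ∧ v2 = u2 ∨ v1 = u2 ∧ v2 = u1) := by
    simpa [Sym2.eq_iff] using hevu
  have hevu'' : ¬(u1 = v1 ∧ u2 = v2 ∨ u1 = v2 ∧ u2 = v1) := by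
    simpa [Sym2.eq_iff] using (Ne.symm hevu)
  have hHadj : ∀ a b : V, Hg.Adj a b ↔
      (((G.Adj a b ∧ s(a, b) ≠ s(u1, u2)) ∨ s(a, b) = s(v1, v2)) ∧ a ≠ b) := by
    intro a b
    rw [hHg, SimpleGraph.fromEdgeSet_adj]
    simp only [Set.mem_union, Set.mem_diff, Set.mem_singleton_iff, SimpleGraph.mem_edgeSet]
    try tauto
  -- entrywise identity
  have key : ∀ a b : V, N a b = M a b
      + pind v1 v2 a * pind v1 v2 b - pind u1 u2 a * pind u1 u2 b := by
    intro a b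
    rw [hN, hM, sl_apply, sl_apply]
    by_cases hab : a = b
    · subst hab
      rw [if_pos rfl, if_pos rfl, if_neg (Hg.irrefl), if_neg (G.irrefl)]
      have hterm : ∀ c, (if Hg.Adj a c then (1:ℝ) else 0)
          = (if G.Adj a c then (1:ℝ) else 0)
            + (if c ≠ a ∧ s(a, c) = s(v1, v2) then (1:ℝ) else 0)
            - (if c ≠ a ∧ s(a, c) = s(u1, u2) then (1:ℝ) else 0) := by
        intro c
        by_cases hca : c = a
        · subst hca; simp [Hg.irrefl, G.irrefl]
        · by_cases hs1 : s(a, c) = s(v1, v2)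
          · have hGne : ¬ G.Adj a c := fun h =>
              hv ((SimpleGraph.mem_edgeSet _).1 (by rw [← hs1]; exact (SimpleGraph.mem_edgeSet _).2 h))
            have hs2 : s(a, c) ≠ s(u1, u2) := by rw [hs1]; exact hevu
            have hH : Hg.Adj a c := (hHadj a c).2 ⟨Or.inr hs1, fun h => hca h.symm⟩
            simp [hH, hGne, hs1, hs2, hca, hevu', hevu'']
          · by_cases hs2 : s(a, c) = s(u1, u2)
            · have hG : G.Adj a c :=
                (SimpleGraph.mem_edgeSet _).1 (by rw [hs2]; exact (SimpleGraph.mem_edgeSet _).2 hu)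
              have hH : ¬ Hg.Adj a c := by
                rw [hHadj]; rintro ⟨(⟨-, h⟩ | h), -⟩
                · exact h hs2
                · exact hs1 h
              simp [hG, hH, hs1, hs2, hca, hevu', hevu'']
            · have hHG : Hg.Adj a c ↔ G.Adj a c := by
                rw [hHadj]
                constructor
                · rintro ⟨(⟨h, -⟩ | h), -⟩
                  · exact h
                  · exact absurd h hs1
                · intro h; exact ⟨Or.inl ⟨h, hs2⟩, fun hh => hca hh.symm⟩
              by_cases hG : G.Adj a c
              · simp [hHG.2 hG, hG, hs1, hs2, hca, hevu', hevu'']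
              · simp [hHG, hG, hs1, hs2, hca, hevu', hevu'']
      rw [Finset.sum_congr rfl (fun c _ => (by convert hterm c :
        @ite ℝ (Hg.Adj a c) (Classical.decRel Hg.Adj a c) 1 0
          = @ite ℝ (G.Adj a c) (Classical.decRel G.Adj a c) 1 0
            + (if c ≠ a ∧ s(a, c) = s(v1, v2) then (1:ℝ) else 0)
            - (if c ≠ a ∧ s(a, c) = s(u1, u2) then (1:ℝ) else 0)))]
      rw [Finset.sum_sub_distrib, Finset.sum_add_distrib,
        pind_count v1 v2 a hv12, pind_count u1 u2 a hu12]
      ring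
    · rw [if_neg hab, if_neg hab,
        pind_mul v1 v2 a b hv12 hab, pind_mul u1 u2 a b hu12 hab]
      by_cases hs1 : s(a, b) = s(v1, v2)
      · have hGne : ¬ G.Adj a b := fun h =>
          hv ((SimpleGraph.mem_edgeSet _).1 (by rw [← hs1]; exact (SimpleGraph.mem_edgeSet _).2 h))
        have hs2 : s(a, b) ≠ s(u1, u2) := by rw [hs1]; exact hevu
        have hH : Hg.Adj a b := (hHadj a b).2 ⟨Or.inr hs1, hab⟩
        simp [hH, hGne, hs1, hs2, hevu', hevu'']
      · by_cases hs2 : s(a, b) = s(u1, u2)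
        · have hG : G.Adj a b :=
            (SimpleGraph.mem_edgeSet _).1 (by rw [hs2]; exact (SimpleGraph.mem_edgeSet _).2 hu)
          have hH : ¬ Hg.Adj a b := by
            rw [hHadj]; rintro ⟨(⟨-, h⟩ | h), -⟩
            · exact h hs2
            · exact hs1 h
          simp [hG, hH, hs1, hs2, hevu', hevu'']
        · have hHG : Hg.Adj a b ↔ G.Adj a b := by
            rw [hHadj]
            constructor
            · rintro ⟨(⟨h, -⟩ | h), -⟩
              · exact h
              · exact absurd h hs1
            · intro h; exact ⟨Or.inl ⟨h, hs2⟩, hab⟩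
          by_cases hG : G.Adj a b
          · simp [hHG.2 hG, hG, hs1, hs2, hevu', hevu'']
          · simp [hHG, hG, hs1, hs2, hevu', hevu'']
  -- row identity
  have hrow : ∀ (y : V → ℝ) (a : V), (N *ᵥ y) a
      = (M *ᵥ y) a + pind v1 v2 a * (y v1 + y v2) - pind u1 u2 a * (y u1 + y u2) := by
    intro y a
    simp only [Matrix.mulVec, dotProduct]
    rw [← pind_dot v1 v2 hv12 y, ← pind_dot u1 u2 hu12 y, Finset.mul_sum, Finset.mul_sum,
      ← Finset.sum_add_distrib, ← Finset.sum_sub_distrib]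
    refine Finset.sum_congr rfl fun b _ => ?_
    rw [key a b]; ring
  have hXX : X ⬝ᵥ X = 1 := by
    rw [dotProduct]; simpa [sq] using hXunit
  have hMX : X ⬝ᵥ (M *ᵥ X) = qspec G := by
    rw [hXeig, dotProduct_smul, hXX, smul_eq_mul, mul_one]
  -- quadratic form identity
  have hquad : X ⬝ᵥ (N *ᵥ X)
      = qspec G + ((X v1 + X v2) ^ 2 - (X u1 + X u2) ^ 2) := by
    rw [← hMX, dotProduct, dotProduct]
    have hterm : ∀ a, X a * (N *ᵥ X) a
        = X a * (M *ᵥ X) a + (pind v1 v2 a * X a) * (X v1 + X v2)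
          - (pind u1 u2 a * X a) * (X u1 + X u2) := by
      intro a; rw [hrow X a]; ring
    rw [Finset.sum_congr rfl (fun a _ => hterm a), Finset.sum_sub_distrib,
      Finset.sum_add_distrib, ← Finset.sum_mul, ← Finset.sum_mul,
      pind_dot v1 v2 hv12 X, pind_dot u1 u2 hu12 X]
    ring
  -- spectral facts
  have hermN : N.IsHermitian := sl_herm Hg
  have hq' : qspec Hg = sSup (spectrum ℝ N) := rfl
  have hermC : (qspec Hg • (1 : Matrix V V ℝ) - N).IsHermitian := by
    unfold Matrix.IsHermitian
    rw [Matrix.conjTranspose_sub, Matrix.conjTranspose_smul, Matrix.conjTranspose_one,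
      hermN.eq, star_trivial]
  have hermC' : (algebraMap ℝ (Matrix V V ℝ) (qspec Hg) - N).IsHermitian := by
    rw [Algebra.algebraMap_eq_smul_one]; exact hermC
  have hC' : (algebraMap ℝ (Matrix V V ℝ) (qspec Hg) - N).PosSemidef := by
    refine (Matrix.IsHermitian.posSemidef_iff_eigenvalues_nonneg hermC').2 fun i => show (0:ℝ) ≤ _ from ?_
    have hmem := Matrix.IsHermitian.eigenvalues_mem_spectrum_real hermC' i
    rw [← spectrum.singleton_sub_eq] at hmem
    obtain ⟨x, hx, y, hy, hxy⟩ := Set.mem_sub.1 hmem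
    rw [Set.mem_singleton_iff] at hx
    subst hx
    have hle : y ≤ qspec Hg := by
      rw [hq']
      exact le_csSup (Matrix.finite_real_spectrum.bddAbove) hy
    linarith [hxy ▸ sub_nonneg.2 hle]
  have hC : (qspec Hg • (1 : Matrix V V ℝ) - N).PosSemidef := by
    rw [Algebra.algebraMap_eq_smul_one] at hC'; exact hC'
  have hCX : ∀ (y : V → ℝ),
      ((qspec Hg • (1 : Matrix V V ℝ) - N) *ᵥ y) = qspec Hg • y - N *ᵥ y := by
    intro y
    rw [Matrix.sub_mulVec, Matrix.smul_mulVec, Matrix.one_mulVec]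
  have hray : X ⬝ᵥ (N *ᵥ X) ≤ qspec Hg := by
    have h0 := hC.dotProduct_mulVec_nonneg X
    rw [show star X = X from funext fun a => star_trivial _] at h0
    rw [hCX, dotProduct_sub, dotProduct_smul, hXX, smul_eq_mul, mul_one] at h0
    linarith
  -- conclusion
  have hdiff : (X u1 + X u2) ^ 2 ≤ (X v1 + X v2) ^ 2 :=
    pow_le_pow_left₀ (add_nonneg (hX0 u1) (hX0 u2)) h1 2
  by_contra hcon
  push_neg at hcon
  have hd0 : (X v1 + X v2) ^ 2 = (X u1 + X u2) ^ 2 := by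
    rw [hquad] at hray; linarith
  have hS : X u1 + X u2 = X v1 + X v2 := by
    nlinarith [add_nonneg (hX0 u1) (hX0 u2), h2]
  have hqeq : qspec Hg = qspec G := by
    rw [hquad] at hray; linarith
  have hzero : star X ⬝ᵥ ((qspec Hg • (1 : Matrix V V ℝ) - N) *ᵥ X) = 0 := by
    rw [show star X = X from funext fun a => star_trivial _, hCX, dotProduct_sub,
      dotProduct_smul, hXX, smul_eq_mul, mul_one, hquad, hd0, hqeq]
    ring
  have hCX0 := (hC.dotProduct_mulVec_zero_iff X).1 hzero
  have hNX : ∀ a, (N *ᵥ X) a = (M *ᵥ X) a := by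
    intro a
    have h3 := congrFun hCX0 a
    rw [hCX] at h3
    simp only [Pi.sub_apply, Pi.smul_apply, smul_eq_mul, Pi.zero_apply] at h3
    have h4 : (N *ᵥ X) a = qspec Hg * X a := by linarith
    rw [h4, hqeq, hXeig]
    simp [Pi.smul_apply, smul_eq_mul]
  have hpeq : ∀ a, pind v1 v2 a = pind u1 u2 a := by
    intro a
    have h3 := hrow X a
    rw [hNX a, hS] at h3
    have h4 : (pind v1 v2 a - pind u1 u2 a) * (X v1 + X v2) = 0 := by linarith
    rcases mul_eq_zero.1 h4 with h5 | h5
    · linarith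
    · exact absurd h5 h2.ne'
  have hp1 : v1 = u1 ∨ v1 = u2 := by
    have := hpeq v1
    simp only [pind, if_pos rfl, if_neg hv12] at this
    by_contra hcc
    push_neg at hcc
    rw [if_neg hcc.1, if_neg hcc.2] at this
    norm_num at this
  have hp2 : v2 = u1 ∨ v2 = u2 := by
    have := hpeq v2
    simp only [pind, if_pos rfl, if_neg (Ne.symm hv12)] at this
    by_contra hcc
    push_neg at hcc
    rw [if_neg hcc.1, if_neg hcc.2] at this
    norm_num at this
  rcases hp1 with h5 | h5 <;> rcases hp2 with h6 | h6
  · exact hv12 (h5.trans h6.symm)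
  · subst h5; subst h6; exact hv hu
  · subst h5; subst h6; exact hv hu.symm
  · exact hv12 (h5.trans h6.symm)
end

section
/- Let S_{2,0,1} be the graph obtained from a central vertex by attaching 2 pendant edges and 1 pendant triangle (so it has 5 vertices and 5 edges). Then q(S_{2,0,1}) > 3 + √5. -/
open Matrix SimpleGraph

/-- The graph `S_{2,0,1}`. -/
def Gr : SimpleGraph (Fin 5) := SimpleGraph.fromEdgeSet
        ({s((0 : Fin 5), 1), s(0, 2), s(0, 3), s(0, 4), s(3, 4)} :
          Set (Sym2 (Fin 5)))

/-- The signless Laplacian of `S_{2,0,1}`, explicitly. -/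
def Mq : Matrix (Fin 5) (Fin 5) ℝ :=
  !![4,1,1,1,1; 1,1,0,0,0; 1,0,1,0,0; 1,0,0,2,1; 1,0,0,1,2]

lemma adj_iff (i j : Fin 5) : Gr.Adj i j ↔
    (s(i,j) = s((0:Fin 5),1) ∨ s(i,j) = s((0:Fin 5),2) ∨ s(i,j) = s((0:Fin 5),3) ∨
     s(i,j) = s((0:Fin 5),4) ∨ s(i,j) = s((3:Fin 5),4)) ∧ i ≠ j := by
  simp [Gr, SimpleGraph.fromEdgeSet_adj, Set.mem_insert_iff]

lemma mydeg (v : Fin 5) (s : Finset (Fin 5)) (h : Gr.neighborSet v = ↑s)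
    {inst : Fintype ↥(Gr.neighborSet v)} : @SimpleGraph.degree _ Gr v inst = s.card := by
  simp [SimpleGraph.degree, SimpleGraph.neighborFinset, h]

lemma ns0 : Gr.neighborSet 0 = ↑({1,2,3,4} : Finset (Fin 5)) := by
  ext u; rw [SimpleGraph.mem_neighborSet, adj_iff]; fin_cases u <;> simp
lemma ns1 : Gr.neighborSet 1 = ↑({0} : Finset (Fin 5)) := by
  ext u; rw [SimpleGraph.mem_neighborSet, adj_iff]; fin_cases u <;> simp
lemma ns2 : Gr.neighborSet 2 = ↑({0} : Finset (Fin 5)) := by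
  ext u; rw [SimpleGraph.mem_neighborSet, adj_iff]; fin_cases u <;> simp
lemma ns3 : Gr.neighborSet 3 = ↑({0,4} : Finset (Fin 5)) := by
  ext u; rw [SimpleGraph.mem_neighborSet, adj_iff]; fin_cases u <;> simp
lemma ns4 : Gr.neighborSet 4 = ↑({0,3} : Finset (Fin 5)) := by
  ext u; rw [SimpleGraph.mem_neighborSet, adj_iff]; fin_cases u <;> simp

lemma sl_eq : signlessLaplacian Gr = Mq := by
  classical
  ext i j
  fin_cases i <;> fin_cases j <;>
    simp [signlessLaplacian, Mq, Matrix.add_apply, Matrix.diagonal, adj_iff,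
      Matrix.vecHead, Matrix.vecTail] <;>
    first
      | rfl
      | (rw [mydeg 0 {1,2,3,4} ns0, show ({1,2,3,4}:Finset (Fin 5)).card = 4 from rfl]; norm_num)
      | (rw [mydeg 1 {0} ns1]; norm_num)
      | (rw [mydeg 2 {0} ns2]; norm_num)
      | (rw [mydeg 3 {0,4} ns3, show ({0,4}:Finset (Fin 5)).card = 2 from rfl]; norm_num)
      | (rw [mydeg 4 {0,3} ns4, show ({0,3}:Finset (Fin 5)).card = 2 from rfl]; norm_num)

set_option maxHeartbeats 3000000 in
/-- The characteristic polynomial of `Mq`. -/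
lemma hp (t : ℝ) : (t • (1 : Matrix (Fin 5) (Fin 5) ℝ) - Mq).det =
    t^5 - 10*t^4 + 32*t^3 - 42*t^2 + 23*t - 4 := by
  simp [Mq, Matrix.det_succ_row_zero, Fin.sum_univ_succ, Matrix.smul_apply,
    Matrix.one_apply, Matrix.sub_apply, Fin.succ_ne_zero, Matrix.vecHead, Matrix.vecTail,
    Matrix.det_fin_three, Matrix.submatrix_apply]
  simp (config := {decide := true}) [Fin.succAbove_of_castSucc_lt, Fin.succAbove_of_le_castSucc]
  ring

attribute [local instance] Matrix.frobeniusSeminormedAddCommGroup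
  Matrix.frobeniusNormedAddCommGroup Matrix.frobeniusNormedRing Matrix.frobeniusNormedAlgebra

set_option maxRecDepth 8000 in
/-- `S_{2,0,1}`: center `0` with pendant edges to `1, 2` and a pendant triangle on
`3, 4`; its `Q`-spectral radius exceeds `3 + √5`. -/
theorem S201_qspec :
    3 + Real.sqrt 5 <
      qspec (SimpleGraph.fromEdgeSet
        ({s((0 : Fin 5), 1), s(0, 2), s(0, 3), s(0, 4), s(3, 4)} :
          Set (Sym2 (Fin 5)))) := by
  show 3 + Real.sqrt 5 < qspec Gr
  have hq : qspec Gr = sSup (spectrum ℝ Mq) := by rw [qspec, sl_eq]; congr!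
  rw [hq]
  -- find a root of the characteristic polynomial in [5.3, 6]
  set f : ℝ → ℝ := fun t => t^5 - 10*t^4 + 32*t^3 - 42*t^2 + 23*t - 4 with hf
  have hcont : ContinuousOn f (Set.Icc (5.3 : ℝ) 6) := (by fun_prop : Continuous f).continuousOn
  have hsub := intermediate_value_Icc (by norm_num : (5.3:ℝ) ≤ 6) hcont
  have h0 : (0:ℝ) ∈ Set.Icc (f 5.3) (f 6) := by constructor <;> · simp only [hf]; norm_num
  obtain ⟨c, hc, hfc⟩ := hsub h0
  have hcspec : c ∈ spectrum ℝ Mq := by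
    rw [spectrum.mem_iff]
    intro hu
    have hdet := (Matrix.isUnit_iff_isUnit_det _).mp hu
    have hroot : c^5 - 10*c^4 + 32*c^3 - 42*c^2 + 23*c - 4 = 0 := hfc
    rw [Algebra.algebraMap_eq_smul_one] at hdet
    rw [hp c] at hdet
    rw [hroot] at hdet
    exact not_isUnit_zero hdet
  have hbdd : BddAbove (spectrum ℝ Mq) := (spectrum.isBounded Mq).bddAbove
  have h53 : (5.3:ℝ) ≤ c := hc.1
  have hsqrt : Real.sqrt 5 < 2.3 := by
    nlinarith [Real.sq_sqrt (by norm_num : (5:ℝ) ≥ 0), Real.sqrt_nonneg 5]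
  calc 3 + Real.sqrt 5 < 5.3 := by linarith
    _ ≤ c := h53
    _ ≤ sSup (spectrum ℝ Mq) := le_csSup hbdd hcspec
end
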